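/- Let p ∈ (0,1] and δ ∈ (0,1), and let n be a positive integer with n ≥ 2·(1 + log(1/δ))/p. If N is a binomial random variable with parameters n and p, then P(N > 1) ≥ 1 − δ. -/

import Mathlib

/-- Analytic core: the probability of at most one success is at most `δ`. -/
lemma binom_tail_core (p δ : ℝ) (hp0 : 0 < p) (hp1 : p ≤ 1) (hδ0 : 0 < δ) (hδ1 : δ < 1)
    (n : ℕ) (hn : 0 < n) (hnth : 2 * (1 + Real.log (1 / δ)) / p ≤ (n : ℝ)) :
    (1 - p) ^ n + (n : ℝ) * p * (1 - p) ^ (n - 1) ≤ δ := by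
  set L : ℝ := Real.log (1 / δ) with hLdef
  have hL : 0 ≤ L := Real.log_nonneg (by rw [le_div_iff₀ hδ0]; linarith)
  have hnp : 2 * (1 + L) ≤ (n : ℝ) * p := by
    rw [div_le_iff₀ hp0] at hnth; linarith
  set x : ℝ := p * ((n : ℝ) - 1) with hxdef
  have hx : 1 + 2 * L ≤ x := by
    have : x = (n : ℝ) * p - p := by ring
    rw [this]; linarith
  have hx0 : 0 < x := by linarith
  -- rewrite LHS
  have hcast : ((n - 1 : ℕ) : ℝ) = (n : ℝ) - 1 := by
    have h1 : 1 ≤ n := hn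
    push_cast [Nat.cast_sub h1]
    ring
  have hpow : (1 - p) ^ n = (1 - p) * (1 - p) ^ (n - 1) := by
    conv_lhs => rw [show n = (n - 1) + 1 by omega]
    rw [pow_succ]; ring
  have h1p : 0 ≤ 1 - p := by linarith
  have hexp1 : (1 - p) ^ (n - 1) ≤ Real.exp (-x) := by
    have h1 : 1 - p ≤ Real.exp (-p) := by
      have := Real.add_one_le_exp (-p); linarith
    calc (1 - p) ^ (n - 1) ≤ Real.exp (-p) ^ (n - 1) :=
          pow_le_pow_left₀ h1p h1 _
      _ = Real.exp (((n - 1 : ℕ) : ℝ) * (-p)) := (Real.exp_nat_mul _ _).symm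
      _ = Real.exp (-x) := by rw [hcast, hxdef]; ring_nf
  have hLHS : (1 - p) ^ n + (n : ℝ) * p * (1 - p) ^ (n - 1)
      = (1 + x) * (1 - p) ^ (n - 1) := by
    rw [hpow, hxdef]; ring
  rw [hLHS]
  have hδexp : δ = Real.exp (-L) := by
    rw [hLdef, Real.log_div one_ne_zero (ne_of_gt hδ0)]
    simp [Real.exp_log hδ0]
  -- key: (1+x) ≤ exp (x - L)
  have hlog : Real.log (1 + x) ≤ x - L := by
    have hpos : (0:ℝ) < (1 + x) / 2 := by linarith
    have h2 : Real.log ((1 + x) / 2) ≤ (1 + x) / 2 - 1 :=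
      Real.log_le_sub_one_of_pos hpos
    have h3 : Real.log (1 + x) = Real.log 2 + Real.log ((1 + x) / 2) := by
      rw [← Real.log_mul (by norm_num) (ne_of_gt hpos)]
      congr 1; ring
    have hlog2 : Real.log 2 < 0.6931471808 := Real.log_two_lt_d9
    rw [h3]; nlinarith
  have hkey : 1 + x ≤ Real.exp (x - L) := by
    have := Real.exp_le_exp.mpr hlog
    rwa [Real.exp_log (by linarith : (0:ℝ) < 1 + x)] at this
  calc (1 + x) * (1 - p) ^ (n - 1)
      ≤ (1 + x) * Real.exp (-x) := by
        apply mul_le_mul_of_nonneg_left hexp1 (by linarith)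
    _ ≤ Real.exp (x - L) * Real.exp (-x) := by
        apply mul_le_mul_of_nonneg_right hkey (Real.exp_pos _).le
    _ = Real.exp (-L) := by rw [← Real.exp_add]; ring_nf
    _ = δ := hδexp.symm

/-- Combined sampling lemma: if `p ∈ (0,1]`, `δ ∈ (0,1)`, `n` is a positive integer
with `n ≥ 2·(1 + log(1/δ))/p`, and `N` is binomial with parameters `n` and `p`,
then `P(N > 1) ≥ 1 − δ`. -/
theorem binomial_more_than_one_prob_ge_one_sub_delta
    (p δ : ℝ) (hp0 : 0 < p) (hp1 : p ≤ 1) (hδ0 : 0 < δ) (hδ1 : δ < 1)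
    (n : ℕ) (hn : 0 < n) (hnth : 2 * (1 + Real.log (1 / δ)) / p ≤ (n : ℝ)) :
    1 - δ ≤
      ∑ k ∈ (Finset.range (n + 1)).filter (fun k => 1 < k),
        (n.choose k : ℝ) * p ^ k * (1 - p) ^ (n - k) := by
  have htotal : ∑ k ∈ Finset.range (n + 1),
      (n.choose k : ℝ) * p ^ k * (1 - p) ^ (n - k) = 1 := by
    calc ∑ k ∈ Finset.range (n + 1), (n.choose k : ℝ) * p ^ k * (1 - p) ^ (n - k)
        = ∑ k ∈ Finset.range (n + 1), p ^ k * (1 - p) ^ (n - k) * (n.choose k : ℝ) := by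
          apply Finset.sum_congr rfl; intro k _; ring
      _ = (p + (1 - p)) ^ n := (add_pow (R := ℝ) p (1 - p) n).symm
      _ = 1 := by norm_num
  have hsplit := Finset.sum_filter_add_sum_filter_not (Finset.range (n + 1))
    (fun k => 1 < k) (fun k => (n.choose k : ℝ) * p ^ k * (1 - p) ^ (n - k))
  have hfilter : (Finset.range (n + 1)).filter (fun k => ¬ 1 < k) = {0, 1} := by
    ext k
    simp only [Finset.mem_filter, Finset.mem_range, Finset.mem_insert,
      Finset.mem_singleton, not_lt]
    omega
  have hsmall : ∑ k ∈ (Finset.range (n + 1)).filter (fun k => ¬ 1 < k),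
      (n.choose k : ℝ) * p ^ k * (1 - p) ^ (n - k)
      = (1 - p) ^ n + (n : ℝ) * p * (1 - p) ^ (n - 1) := by
    rw [hfilter, Finset.sum_insert (by simp), Finset.sum_singleton]
    simp only [Nat.choose_zero_right, Nat.choose_one_right, pow_zero, pow_one,
      Nat.cast_one, one_mul, Nat.sub_zero]
  have hcore := binom_tail_core p δ hp0 hp1 hδ0 hδ1 n hn hnth
  rw [hsmall] at hsplit
  rw [htotal] at hsplit
  linarith
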